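/- arXiv:math/0702401 — 2 statements merged into one kernel-verified Lean document; each statement's English description precedes it below -/
import Mathlib

section
/- For every integer n ≥ 2 and every τ in the complex upper half-plane ℍ, the functions y_n satisfy the recursion y_{n-1}(τ)² · x_n(τ) = y_n(τ)² (the squared form of y_{n-1} = y_n/√(x_n)). -/
open Complex Filter Topology

/-- Jacobi theta function θ₂(τ) = ∑_{n∈ℤ} exp(πiτ(n+1/2)²). -/
noncomputable def θ₂ (τ : ℂ) : ℂ :=
  ∑' n : ℤ, Complex.exp (Real.pi * Complex.I * τ * ((n : ℂ) + 1/2)^2)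

/-- Jacobi theta function θ₃(τ) = ∑_{n∈ℤ} exp(πiτn²). -/
noncomputable def θ₃ (τ : ℂ) : ℂ :=
  ∑' n : ℤ, Complex.exp (Real.pi * Complex.I * τ * (n : ℂ)^2)

/-- x_n(τ) = 2θ₃(2^{n-1}τ)/θ₂(2^{n-1}τ). -/
noncomputable def xfun (n : ℕ) (τ : ℂ) : ℂ :=
  2 * θ₃ (2^(n-1) * τ) / θ₂ (2^(n-1) * τ)

/-- y_n(τ) = θ₂(8τ)/θ₂(2^{n-1}τ). -/
noncomputable def yfun (n : ℕ) (τ : ℂ) : ℂ :=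
  θ₂ (8 * τ) / θ₂ (2^(n-1) * τ)

noncomputable def θ₄ (τ : ℂ) : ℂ :=
  ∑' n : ℤ, Complex.exp (Real.pi * Complex.I * τ * (n : ℂ)^2 + Real.pi * Complex.I * (n : ℂ))

def eSplit₂ : Bool × (ℤ × ℤ) ≃ ℤ × ℤ where
  toFun q := match q with
    | (false, (k, l)) => (k + l, k - l)
    | (true, (k, l)) => (k + l, l - k - 1)
  invFun p := if (p.1 + p.2) % 2 = 0 then (false, ((p.1 + p.2)/2, (p.1 - p.2)/2))
    else (true, ((p.1 - p.2 - 1)/2, (p.1 + p.2 + 1)/2))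
  left_inv := by
    rintro ⟨b, k, l⟩
    cases b <;> simp only [] <;> split_ifs with h <;> simp_all [Prod.ext_iff] <;> omega
  right_inv := by
    rintro ⟨m, n⟩
    by_cases h : (m + n) % 2 = 0 <;> simp only [h, if_pos, if_neg, Prod.ext_iff] <;>
      simp_all <;> omega

def eSplit₁ : Bool × (ℤ × ℤ) ≃ ℤ × ℤ where
  toFun q := match q with
    | (false, (k, l)) => (k + l, k - l)
    | (true, (k, l)) => (k + l + 1, k - l)
  invFun p := if (p.1 + p.2) % 2 = 0 then (false, ((p.1 + p.2)/2, (p.1 - p.2)/2))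
    else (true, ((p.1 + p.2 - 1)/2, (p.1 - p.2 - 1)/2))
  left_inv := by
    rintro ⟨b, k, l⟩
    cases b <;> simp only [] <;> split_ifs with h <;> simp_all [Prod.ext_iff] <;> omega
  right_inv := by
    rintro ⟨m, n⟩
    by_cases h : (m + n) % 2 = 0 <;> simp only [h, if_pos, if_neg, Prod.ext_iff] <;>
      simp_all <;> omega

lemma summable_t2 {τ : ℂ} (hτ : 0 < τ.im) :
    Summable (fun n : ℤ => cexp (Real.pi * I * τ * ((n : ℂ) + 1/2)^2)) := by
  have h := ((summable_jacobiTheta₂_term_iff (τ/2) τ).mpr hτ).mul_left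
    (cexp (Real.pi * I * τ / 4))
  refine h.congr fun n => ?_
  rw [jacobiTheta₂_term, ← Complex.exp_add]; congr 1; ring

lemma summable_t3 {τ : ℂ} (hτ : 0 < τ.im) :
    Summable (fun n : ℤ => cexp (Real.pi * I * τ * (n : ℂ)^2)) := by
  refine ((summable_jacobiTheta₂_term_iff 0 τ).mpr hτ).congr fun n => ?_
  rw [jacobiTheta₂_term]; congr 1; ring

lemma summable_t4 {τ : ℂ} (hτ : 0 < τ.im) :
    Summable (fun n : ℤ => cexp (Real.pi * I * τ * (n : ℂ)^2 + Real.pi * I * (n : ℂ))) := by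
  refine ((summable_jacobiTheta₂_term_iff (1/2) τ).mpr hτ).congr fun n => ?_
  rw [jacobiTheta₂_term]; congr 1; ring

lemma im_two_mul {τ : ℂ} (hτ : 0 < τ.im) : 0 < (2 * τ).im := by
  simp [Complex.mul_im]; linarith

set_option maxHeartbeats 1000000 in
/-- Landen-type identity θ₂(τ)² = 2 θ₂(2τ) θ₃(2τ). -/
lemma theta2_sq {τ : ℂ} (hτ : 0 < τ.im) : θ₂ τ ^ 2 = 2 * (θ₂ (2*τ) * θ₃ (2*τ)) := by
  have h2τ := im_two_mul hτ
  have hs2 := summable_t2 hτ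
  have hs2' := summable_t2 h2τ
  have hs3' := summable_t3 h2τ
  have hn2 := summable_norm_iff.mpr hs2
  have hn2' := summable_norm_iff.mpr hs2'
  have hn3' := summable_norm_iff.mpr hs3'
  have hF : Summable (fun p : ℤ × ℤ =>
      cexp (Real.pi * I * τ * ((p.1 : ℂ) + 1/2)^2) * cexp (Real.pi * I * τ * ((p.2 : ℂ) + 1/2)^2)) :=
    summable_mul_of_summable_norm
      (f := fun n : ℤ => cexp (Real.pi * I * τ * ((n : ℂ) + 1/2)^2))
      (g := fun n : ℤ => cexp (Real.pi * I * τ * ((n : ℂ) + 1/2)^2)) hn2 hn2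
  have step1 : θ₂ τ ^ 2 = ∑' p : ℤ × ℤ,
      cexp (Real.pi * I * τ * ((p.1 : ℂ) + 1/2)^2) * cexp (Real.pi * I * τ * ((p.2 : ℂ) + 1/2)^2) := by
    rw [θ₂, sq]
    exact tsum_mul_tsum_of_summable_norm
      (f := fun n : ℤ => cexp (Real.pi * I * τ * ((n : ℂ) + 1/2)^2))
      (g := fun n : ℤ => cexp (Real.pi * I * τ * ((n : ℂ) + 1/2)^2)) hn2 hn2
  have half : ∑' q : ℤ × ℤ,
      cexp (Real.pi * I * (2*τ) * ((q.1 : ℂ) + 1/2)^2) * cexp (Real.pi * I * (2*τ) * (q.2 : ℂ)^2)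
      = θ₂ (2*τ) * θ₃ (2*τ) := by
    rw [θ₂, θ₃]
    exact (tsum_mul_tsum_of_summable_norm
      (f := fun n : ℤ => cexp (Real.pi * I * (2*τ) * ((n : ℂ) + 1/2)^2))
      (g := fun n : ℤ => cexp (Real.pi * I * (2*τ) * (n : ℂ)^2)) hn2' hn3').symm
  have hFe : Summable (fun c : Bool × (ℤ × ℤ) =>
      cexp (Real.pi * I * τ * (((eSplit₂ c).1 : ℂ) + 1/2)^2) *
        cexp (Real.pi * I * τ * (((eSplit₂ c).2 : ℂ) + 1/2)^2)) :=
    eSplit₂.summable_iff.mpr hF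
  have c1 : ∀ q : ℤ × ℤ,
      cexp (Real.pi * I * τ * (((eSplit₂ (false, q)).1 : ℂ) + 1/2)^2) *
        cexp (Real.pi * I * τ * (((eSplit₂ (false, q)).2 : ℂ) + 1/2)^2)
      = cexp (Real.pi * I * (2*τ) * ((q.1 : ℂ) + 1/2)^2) * cexp (Real.pi * I * (2*τ) * (q.2 : ℂ)^2) := by
    rintro ⟨k, l⟩
    show cexp (Real.pi * I * τ * (((k + l : ℤ) : ℂ) + 1/2)^2) *
        cexp (Real.pi * I * τ * (((k - l : ℤ) : ℂ) + 1/2)^2) = _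
    rw [← Complex.exp_add, ← Complex.exp_add]
    congr 1
    push_cast
    ring
  have c2 : ∀ q : ℤ × ℤ,
      cexp (Real.pi * I * τ * (((eSplit₂ (true, q)).1 : ℂ) + 1/2)^2) *
        cexp (Real.pi * I * τ * (((eSplit₂ (true, q)).2 : ℂ) + 1/2)^2)
      = cexp (Real.pi * I * (2*τ) * ((q.1 : ℂ) + 1/2)^2) * cexp (Real.pi * I * (2*τ) * (q.2 : ℂ)^2) := by
    rintro ⟨k, l⟩
    show cexp (Real.pi * I * τ * (((k + l : ℤ) : ℂ) + 1/2)^2) *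
        cexp (Real.pi * I * τ * (((l - k - 1 : ℤ) : ℂ) + 1/2)^2) = _
    rw [← Complex.exp_add, ← Complex.exp_add]
    congr 1
    push_cast
    ring
  have hG : Summable (fun q : ℤ × ℤ =>
      cexp (Real.pi * I * (2*τ) * ((q.1 : ℂ) + 1/2)^2) * cexp (Real.pi * I * (2*τ) * (q.2 : ℂ)^2)) :=
    summable_mul_of_summable_norm
      (f := fun n : ℤ => cexp (Real.pi * I * (2*τ) * ((n : ℂ) + 1/2)^2))
      (g := fun n : ℤ => cexp (Real.pi * I * (2*τ) * (n : ℂ)^2)) hn2' hn3'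
  have hslice : ∀ b : Bool, Summable (fun q : ℤ × ℤ =>
      cexp (Real.pi * I * τ * (((eSplit₂ (b, q)).1 : ℂ) + 1/2)^2) *
        cexp (Real.pi * I * τ * (((eSplit₂ (b, q)).2 : ℂ) + 1/2)^2)) := by
    intro b
    cases b
    · exact hG.congr fun q => (c1 q).symm
    · exact hG.congr fun q => (c2 q).symm
  rw [step1, ← eSplit₂.tsum_eq, hFe.tsum_prod' hslice, tsum_bool,
    tsum_congr c1, tsum_congr c2, half]
  ring
set_option maxHeartbeats 1000000 in
/-- θ₃(τ) θ₄(τ) = θ₄(2τ)². -/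
lemma theta34 {τ : ℂ} (hτ : 0 < τ.im) : θ₃ τ * θ₄ τ = θ₄ (2*τ) ^ 2 := by
  have h2τ := im_two_mul hτ
  have hs3 := summable_t3 hτ
  have hs4 := summable_t4 hτ
  have hs4' := summable_t4 h2τ
  have hn3 := summable_norm_iff.mpr hs3
  have hn4 := summable_norm_iff.mpr hs4
  have hn4' := summable_norm_iff.mpr hs4'
  have hF : Summable (fun p : ℤ × ℤ =>
      cexp (Real.pi * I * τ * (p.1 : ℂ)^2) *
        cexp (Real.pi * I * τ * (p.2 : ℂ)^2 + Real.pi * I * (p.2 : ℂ))) :=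
    summable_mul_of_summable_norm
      (f := fun n : ℤ => cexp (Real.pi * I * τ * (n : ℂ)^2))
      (g := fun n : ℤ => cexp (Real.pi * I * τ * (n : ℂ)^2 + Real.pi * I * (n : ℂ))) hn3 hn4
  have step1 : θ₃ τ * θ₄ τ = ∑' p : ℤ × ℤ,
      cexp (Real.pi * I * τ * (p.1 : ℂ)^2) *
        cexp (Real.pi * I * τ * (p.2 : ℂ)^2 + Real.pi * I * (p.2 : ℂ)) := by
    rw [θ₃, θ₄]
    exact tsum_mul_tsum_of_summable_norm
      (f := fun n : ℤ => cexp (Real.pi * I * τ * (n : ℂ)^2))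
      (g := fun n : ℤ => cexp (Real.pi * I * τ * (n : ℂ)^2 + Real.pi * I * (n : ℂ))) hn3 hn4
  have hFe : Summable (fun c : Bool × (ℤ × ℤ) =>
      cexp (Real.pi * I * τ * ((eSplit₁ c).1 : ℂ)^2) *
        cexp (Real.pi * I * τ * ((eSplit₁ c).2 : ℂ)^2 + Real.pi * I * ((eSplit₁ c).2 : ℂ))) :=
    eSplit₁.summable_iff.mpr hF
  -- even part equals the θ₄(2τ)² summand
  have c1 : ∀ q : ℤ × ℤ,
      cexp (Real.pi * I * τ * ((eSplit₁ (false, q)).1 : ℂ)^2) *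
        cexp (Real.pi * I * τ * ((eSplit₁ (false, q)).2 : ℂ)^2 +
          Real.pi * I * ((eSplit₁ (false, q)).2 : ℂ))
      = cexp (Real.pi * I * (2*τ) * (q.1 : ℂ)^2 + Real.pi * I * (q.1 : ℂ)) *
          cexp (Real.pi * I * (2*τ) * (q.2 : ℂ)^2 + Real.pi * I * (q.2 : ℂ)) := by
    rintro ⟨k, l⟩
    show cexp (Real.pi * I * τ * ((k + l : ℤ) : ℂ)^2) *
        cexp (Real.pi * I * τ * ((k - l : ℤ) : ℂ)^2 + Real.pi * I * ((k - l : ℤ) : ℂ)) = _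
    rw [← Complex.exp_add, ← Complex.exp_add]
    rw [show Real.pi * I * τ * ((k + l : ℤ) : ℂ)^2 +
        (Real.pi * I * τ * ((k - l : ℤ) : ℂ)^2 + Real.pi * I * ((k - l : ℤ) : ℂ))
        = (Real.pi * I * (2*τ) * (k : ℂ)^2 + Real.pi * I * (k : ℂ) +
          (Real.pi * I * (2*τ) * (l : ℂ)^2 + Real.pi * I * (l : ℂ))) + (-l : ℤ) * (2 * Real.pi * I)
        by push_cast; ring]
    rw [Complex.exp_add, Complex.exp_int_mul_two_pi_mul_I, mul_one]
  -- odd part summand is antisymmetric under (k,l) ↦ (k,-l-1)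
  have c2 : ∀ q : ℤ × ℤ,
      cexp (Real.pi * I * τ * ((eSplit₁ (true, (q.1, -q.2 - 1))).1 : ℂ)^2) *
        cexp (Real.pi * I * τ * ((eSplit₁ (true, (q.1, -q.2 - 1))).2 : ℂ)^2 +
          Real.pi * I * ((eSplit₁ (true, (q.1, -q.2 - 1))).2 : ℂ))
      = - (cexp (Real.pi * I * τ * ((eSplit₁ (true, q)).1 : ℂ)^2) *
        cexp (Real.pi * I * τ * ((eSplit₁ (true, q)).2 : ℂ)^2 +
          Real.pi * I * ((eSplit₁ (true, q)).2 : ℂ))) := by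
    rintro ⟨k, l⟩
    show cexp (Real.pi * I * τ * ((k + (-l - 1) + 1 : ℤ) : ℂ)^2) *
        cexp (Real.pi * I * τ * ((k - (-l - 1) : ℤ) : ℂ)^2 +
          Real.pi * I * ((k - (-l - 1) : ℤ) : ℂ))
      = - (cexp (Real.pi * I * τ * ((k + l + 1 : ℤ) : ℂ)^2) *
        cexp (Real.pi * I * τ * ((k - l : ℤ) : ℂ)^2 + Real.pi * I * ((k - l : ℤ) : ℂ)))
    rw [← Complex.exp_add, ← Complex.exp_add]
    rw [show Real.pi * I * τ * ((k + (-l - 1) + 1 : ℤ) : ℂ)^2 +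
        (Real.pi * I * τ * ((k - (-l - 1) : ℤ) : ℂ)^2 + Real.pi * I * ((k - (-l - 1) : ℤ) : ℂ))
        = (Real.pi * I * τ * ((k + l + 1 : ℤ) : ℂ)^2 +
          (Real.pi * I * τ * ((k - l : ℤ) : ℂ)^2 + Real.pi * I * ((k - l : ℤ) : ℂ)))
          + ((l : ℤ) * (2 * Real.pi * I) + Real.pi * I)
        by push_cast; ring]
    have hc : cexp (((l : ℤ) : ℂ) * (2 * Real.pi * I) + Real.pi * I) = -1 := by
      rw [Complex.exp_add, Complex.exp_int_mul_two_pi_mul_I, one_mul, Complex.exp_pi_mul_I]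
    rw [Complex.exp_add, hc]
    ring
  -- the odd-part sum vanishes
  have hodd : ∑' q : ℤ × ℤ,
      cexp (Real.pi * I * τ * ((eSplit₁ (true, q)).1 : ℂ)^2) *
        cexp (Real.pi * I * τ * ((eSplit₁ (true, q)).2 : ℂ)^2 +
          Real.pi * I * ((eSplit₁ (true, q)).2 : ℂ)) = 0 := by
    set T := ∑' q : ℤ × ℤ,
      cexp (Real.pi * I * τ * ((eSplit₁ (true, q)).1 : ℂ)^2) *
        cexp (Real.pi * I * τ * ((eSplit₁ (true, q)).2 : ℂ)^2 +
          Real.pi * I * ((eSplit₁ (true, q)).2 : ℂ)) with hT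
    have hι : Function.Involutive (fun q : ℤ × ℤ => (q.1, -q.2 - 1)) := by
      intro q; simp
    have := (hι.toPerm _).tsum_eq (f := fun q : ℤ × ℤ =>
      cexp (Real.pi * I * τ * ((eSplit₁ (true, q)).1 : ℂ)^2) *
        cexp (Real.pi * I * τ * ((eSplit₁ (true, q)).2 : ℂ)^2 +
          Real.pi * I * ((eSplit₁ (true, q)).2 : ℂ)))
    rw [← hT] at this
    have hneg : ∑' q : ℤ × ℤ,
        cexp (Real.pi * I * τ * ((eSplit₁ (true, ((q.1, -q.2 - 1) : ℤ × ℤ))).1 : ℂ)^2) *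
          cexp (Real.pi * I * τ * ((eSplit₁ (true, ((q.1, -q.2 - 1) : ℤ × ℤ))).2 : ℂ)^2 +
            Real.pi * I * ((eSplit₁ (true, ((q.1, -q.2 - 1) : ℤ × ℤ))).2 : ℂ)) = -T := by
      rw [hT, ← tsum_neg]
      exact tsum_congr c2
    rw [show (fun q : ℤ × ℤ =>
      cexp (Real.pi * I * τ * ((eSplit₁ (true, ((Function.Involutive.toPerm _ hι) q : ℤ × ℤ))).1 : ℂ)^2) *
        cexp (Real.pi * I * τ * ((eSplit₁ (true, ((Function.Involutive.toPerm _ hι) q : ℤ × ℤ))).2 : ℂ)^2 +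
          Real.pi * I * ((eSplit₁ (true, ((Function.Involutive.toPerm _ hι) q : ℤ × ℤ))).2 : ℂ)))
      = (fun q : ℤ × ℤ =>
      cexp (Real.pi * I * τ * ((eSplit₁ (true, ((q.1, -q.2 - 1) : ℤ × ℤ))).1 : ℂ)^2) *
        cexp (Real.pi * I * τ * ((eSplit₁ (true, ((q.1, -q.2 - 1) : ℤ × ℤ))).2 : ℂ)^2 +
          Real.pi * I * ((eSplit₁ (true, ((q.1, -q.2 - 1) : ℤ × ℤ))).2 : ℂ))) from rfl] at this
    rw [hneg] at this
    exact add_self_eq_zero.mp (by rw [hT]; linear_combination -this)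
  have hG : Summable (fun q : ℤ × ℤ =>
      cexp (Real.pi * I * (2*τ) * ((q.1 : ℂ))^2 + Real.pi * I * (q.1 : ℂ)) *
        cexp (Real.pi * I * (2*τ) * (q.2 : ℂ)^2 + Real.pi * I * (q.2 : ℂ))) :=
    summable_mul_of_summable_norm
      (f := fun n : ℤ => cexp (Real.pi * I * (2*τ) * (n : ℂ)^2 + Real.pi * I * (n : ℂ)))
      (g := fun n : ℤ => cexp (Real.pi * I * (2*τ) * (n : ℂ)^2 + Real.pi * I * (n : ℂ))) hn4' hn4'
  have hslice : ∀ b : Bool, Summable (fun q : ℤ × ℤ =>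
      cexp (Real.pi * I * τ * ((eSplit₁ (b, q)).1 : ℂ)^2) *
        cexp (Real.pi * I * τ * ((eSplit₁ (b, q)).2 : ℂ)^2 +
          Real.pi * I * ((eSplit₁ (b, q)).2 : ℂ))) := by
    intro b
    cases b
    · exact hG.congr fun q => (c1 q).symm
    · have hinj : Function.Injective (fun q : ℤ × ℤ => ((true, q) : Bool × (ℤ × ℤ))) :=
        fun a b h => (Prod.ext_iff.mp h).2
      exact (hFe.comp_injective hinj).congr fun q => rfl
  have half : ∑' q : ℤ × ℤ,
      cexp (Real.pi * I * (2*τ) * ((q.1 : ℂ))^2 + Real.pi * I * (q.1 : ℂ)) *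
        cexp (Real.pi * I * (2*τ) * (q.2 : ℂ)^2 + Real.pi * I * (q.2 : ℂ))
      = θ₄ (2*τ) ^ 2 := by
    rw [θ₄, sq]
    exact (tsum_mul_tsum_of_summable_norm
      (f := fun n : ℤ => cexp (Real.pi * I * (2*τ) * (n : ℂ)^2 + Real.pi * I * (n : ℂ)))
      (g := fun n : ℤ => cexp (Real.pi * I * (2*τ) * (n : ℂ)^2 + Real.pi * I * (n : ℂ))) hn4' hn4').symm
  rw [step1, ← eSplit₁.tsum_eq, hFe.tsum_prod' hslice, tsum_bool, tsum_congr c1, half, hodd,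
    add_zero]
lemma θ₄_eq (τ : ℂ) : θ₄ τ = jacobiTheta₂ (1/2) τ := by
  rw [θ₄, jacobiTheta₂]
  refine tsum_congr fun n => ?_
  rw [jacobiTheta₂_term]
  congr 1
  ring

lemma θ₂_eq (τ : ℂ) : θ₂ τ = cexp (Real.pi * I * τ / 4) * jacobiTheta₂ (τ/2) τ := by
  rw [θ₂, jacobiTheta₂, ← tsum_mul_left]
  refine tsum_congr fun n => ?_
  rw [jacobiTheta₂_term, ← Complex.exp_add]
  congr 1
  ring

lemma θ₄_ne_zero_of_big {τ : ℂ} (hτ : 0 < τ.im) (h3 : Real.exp (-Real.pi * τ.im) < 1/3) :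
    θ₄ τ ≠ 0 := by
  set r := Real.exp (-Real.pi * τ.im) with hr
  have hr0 : 0 < r := Real.exp_pos _
  have hr1 : r < 1 := by linarith
  have h1r : 0 < 1 - r := by linarith
  have hsum := summable_t4 hτ
  have hsplit := hsum.tsum_eq_add_tsum_ite 0
  have hzero : cexp (Real.pi * I * τ * ((0:ℤ) : ℂ)^2 + Real.pi * I * ((0:ℤ) : ℂ)) = 1 := by
    norm_num
  have hθ : θ₄ τ - 1 = ∑' n : ℤ, if n = 0 then 0 else
      cexp (Real.pi * I * τ * (n : ℂ)^2 + Real.pi * I * (n : ℂ)) := by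
    rw [θ₄, hsplit, hzero]
    ring
  -- termwise norm bound
  have hnorm : ∀ n : ℤ, ‖cexp (Real.pi * I * τ * (n : ℂ)^2 + Real.pi * I * (n : ℂ))‖
      ≤ r ^ n.natAbs := by
    intro n
    rw [Complex.exp_add, norm_mul]
    have h1 : ‖cexp (Real.pi * I * (n : ℂ))‖ = 1 := by
      rw [Complex.norm_exp]
      have : (Real.pi * I * (n : ℂ)).re = 0 := by simp [Complex.mul_re]
      rw [this, Real.exp_zero]
    rw [h1, mul_one]
    have h2 : cexp (Real.pi * I * τ * (n : ℂ)^2) = cexp (Real.pi * I * (n : ℂ)^2 * τ) := by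
      congr 1; ring
    rw [h2]
    exact norm_exp_mul_sq_le hτ n
  have hbound : ∀ n : ℤ, ‖if n = 0 then (0:ℂ) else
      cexp (Real.pi * I * τ * (n : ℂ)^2 + Real.pi * I * (n : ℂ))‖
      ≤ (if n = 0 then (0:ℝ) else r ^ n.natAbs) := by
    intro n
    split_ifs with h
    · simp
    · exact hnorm n
  -- the comparison series sums to 2*(r/(1-r))
  have hgeo : HasSum (fun n : ℕ => r ^ (n+1)) (r * (1-r)⁻¹) := by
    simpa only [← pow_succ'] using (hasSum_geometric_of_lt_one hr0.le hr1).mul_left r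
  have hnat : HasSum (fun n : ℕ => if (n : ℤ) = 0 then (0:ℝ) else r ^ ((n : ℤ)).natAbs)
      (r * (1-r)⁻¹) := by
    rw [← hasSum_nat_add_iff' 1]
    have hfun : ∀ n : ℕ, (if ((n + 1 : ℕ) : ℤ) = 0 then (0:ℝ) else r ^ ((n + 1 : ℕ) : ℤ).natAbs)
        = r ^ (n + 1) := by
      intro n
      rw [if_neg (by exact_mod_cast Nat.succ_ne_zero n)]
      congr 1
      all_goals omega
    simp only [hfun, Finset.range_one, Finset.sum_singleton, Nat.cast_zero]
    norm_num
    exact hgeo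
  have hneg : HasSum (fun n : ℕ => if (-(n+1) : ℤ) = 0 then (0:ℝ) else r ^ ((-(n+1) : ℤ)).natAbs)
      (r * (1-r)⁻¹) := by
    have hfun : ∀ n : ℕ, (if (-((n:ℤ)+1) : ℤ) = 0 then (0:ℝ) else r ^ ((-((n:ℤ)+1) : ℤ)).natAbs)
        = r ^ (n + 1) := by
      intro n
      rw [if_neg (by omega)]
      congr 1
      all_goals omega
    simp only [hfun]
    exact hgeo
  have hg : HasSum (fun n : ℤ => if n = 0 then (0:ℝ) else r ^ n.natAbs)
      (r * (1-r)⁻¹ + r * (1-r)⁻¹) := HasSum.of_nat_of_neg_add_one hnat hneg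
  have hsn : Summable (fun n : ℤ => ‖if n = 0 then (0:ℂ) else
      cexp (Real.pi * I * τ * (n : ℂ)^2 + Real.pi * I * (n : ℂ))‖) :=
    Summable.of_nonneg_of_le (fun n => norm_nonneg _) hbound hg.summable
  have key : ‖θ₄ τ - 1‖ ≤ r * (1-r)⁻¹ + r * (1-r)⁻¹ := by
    rw [hθ]
    refine (norm_tsum_le_tsum_norm hsn).trans ?_
    rw [← hg.tsum_eq]
    exact Summable.tsum_le_tsum hbound hsn hg.summable
  have hlt : r * (1-r)⁻¹ + r * (1-r)⁻¹ < 1 := by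
    have : r * (1-r)⁻¹ < 1/2 := by
      rw [← div_eq_mul_inv, div_lt_iff₀ h1r]
      linarith
    linarith
  intro h0
  rw [h0] at key
  simp only [zero_sub, norm_neg, norm_one] at key
  linarith

lemma θ₄_ne_zero_aux : ∀ N : ℕ, ∀ τ : ℂ, 0 < τ.im →
    Real.exp (-Real.pi * ((2:ℝ)^N * τ.im)) < 1/3 → θ₄ τ ≠ 0 := by
  intro N
  induction N with
  | zero =>
    intro τ hτ h
    refine θ₄_ne_zero_of_big hτ ?_
    simpa using h
  | succ N IH =>
    intro τ hτ h
    have him : (2 * τ).im = 2 * τ.im := by simp [Complex.mul_im]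
    have h2 : θ₄ (2*τ) ≠ 0 := by
      refine IH (2*τ) (im_two_mul hτ) ?_
      rw [him, show (2:ℝ)^N * (2 * τ.im) = (2:ℝ)^(N+1) * τ.im by ring]
      exact h
    intro h0
    apply pow_ne_zero 2 h2
    rw [← theta34 hτ, h0, mul_zero]

lemma θ₄_ne_zero {τ : ℂ} (hτ : 0 < τ.im) : θ₄ τ ≠ 0 := by
  obtain ⟨N, hN⟩ := pow_unbounded_of_one_lt ((1:ℝ)/τ.im) (by norm_num : (1:ℝ) < 2)
  have hs : 1 < (2:ℝ)^N * τ.im := by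
    rw [div_lt_iff₀ hτ] at hN
    linarith
  refine θ₄_ne_zero_aux N τ hτ ?_
  have hpi : (3:ℝ) < Real.pi := Real.pi_gt_three
  have h1 : (3:ℝ) < Real.exp (Real.pi * ((2:ℝ)^N * τ.im)) := by
    have : (3:ℝ) < Real.pi * ((2:ℝ)^N * τ.im) + 1 := by nlinarith
    exact this.trans_le (Real.add_one_le_exp _)
  rw [show -Real.pi * ((2:ℝ)^N * τ.im) = -(Real.pi * ((2:ℝ)^N * τ.im)) by ring, Real.exp_neg]
  rw [show (1:ℝ)/3 = 3⁻¹ by norm_num]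
  exact inv_strictAnti₀ (by norm_num) h1

lemma θ₃_ne_zero {τ : ℂ} (hτ : 0 < τ.im) : θ₃ τ ≠ 0 := by
  intro h0
  apply pow_ne_zero 2 (θ₄_ne_zero (im_two_mul hτ))
  rw [← theta34 hτ, h0, zero_mul]

lemma θ₂_ne_zero {τ : ℂ} (hτ : 0 < τ.im) : θ₂ τ ≠ 0 := by
  have hτ0 : τ ≠ 0 := by
    intro h
    rw [h] at hτ
    simp at hτ
  rw [θ₂_eq]
  refine mul_ne_zero (Complex.exp_ne_zero _) ?_
  rw [jacobiTheta₂_functional_equation (τ/2) τ]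
  have him' : 0 < (-1/τ).im := by
    rw [div_eq_mul_inv, neg_one_mul, Complex.neg_im, Complex.inv_im, neg_div, neg_neg]
    exact div_pos hτ (Complex.normSq_pos.mpr hτ0)
  have hhalf : τ/2/τ = 1/2 := by
    field_simp
  refine mul_ne_zero (mul_ne_zero ?_ (Complex.exp_ne_zero _)) ?_
  · apply one_div_ne_zero
    rw [Ne, Complex.cpow_eq_zero_iff]
    rintro ⟨h, -⟩
    exact mul_ne_zero (neg_ne_zero.mpr Complex.I_ne_zero) hτ0 h
  · rw [hhalf, ← θ₄_eq]
    exact θ₄_ne_zero him'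
theorem y_recursion (n : ℕ) (hn : 2 ≤ n) (τ : ℂ) (hτ : 0 < τ.im) :
    yfun (n - 1) τ ^ 2 * xfun n τ = yfun n τ ^ 2 := by
  have hk1 : n - 1 - 1 = n - 2 := by omega
  have hk2 : n - 1 = (n - 2) + 1 := by omega
  set k := n - 2 with hk
  have hσim : 0 < ((2:ℂ)^k * τ).im := by
    have h1 : ((2:ℂ)^k * τ).im = (2:ℝ)^k * τ.im := by
      rw [show ((2:ℂ)^k) = (((2:ℝ)^k : ℝ) : ℂ) by push_cast; ring]
      rw [Complex.im_ofReal_mul]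
    rw [h1]
    exact mul_pos (pow_pos two_pos k) hτ
  have h2σim : 0 < (2 * ((2:ℂ)^k * τ)).im := im_two_mul hσim
  have key := theta2_sq hσim
  have hB := θ₂_ne_zero hσim
  have hD := θ₂_ne_zero h2σim
  have hC := θ₃_ne_zero h2σim
  rw [yfun, yfun, xfun, hk1, hk2]
  have hpow : (2:ℂ)^(k+1) * τ = 2 * ((2:ℂ)^k * τ) := by ring
  rw [hpow]
  set A := θ₂ (8 * τ)
  set B := θ₂ ((2:ℂ)^k * τ)
  set D := θ₂ (2 * ((2:ℂ)^k * τ))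
  set C := θ₃ (2 * ((2:ℂ)^k * τ))
  field_simp
  linear_combination (-(A^2)) * key
end

section
/- Let n ≥ 6 be an even integer, let k be an integer with 0 ≤ k ≤ 3, and let σ = (a b; 2^k d) ∈ SL₂(ℤ). Then x_n and y_n have neither zeros nor poles at the cusp a/2^k: there exist nonzero complex numbers ε₁ and ε₂ such that x_n(στ) → ε₁ and y_n(στ) → ε₂ as Im τ → ∞, where στ = (aτ+b)/(2^kτ+d). -/
open Complex Filter Topology

/- ### auxiliary lemmas -/

lemma theta3_eq (τ : ℂ) : θ₃ τ = jacobiTheta₂ 0 τ := by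
  refine tsum_congr fun n => ?_
  simp only [jacobiTheta₂_term, mul_zero, zero_add]
  congr 1
  ring

lemma theta2_eq (τ : ℂ) : θ₂ τ = Complex.exp (Real.pi * I * τ / 4) * jacobiTheta₂ (τ/2) τ := by
  rw [θ₂, jacobiTheta₂, ← tsum_mul_left]
  refine tsum_congr fun n => ?_
  rw [jacobiTheta₂_term, ← Complex.exp_add]
  congr 1
  ring

lemma theta2_add_int (v : ℂ) (m : ℤ) :
    θ₂ (v + (m : ℂ)) = Complex.exp (Real.pi * I * (m : ℂ) / 4) * θ₂ v := by
  rw [θ₂, θ₂, ← tsum_mul_left]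
  refine tsum_congr fun n => ?_
  obtain ⟨e, he⟩ : Even (n^2 + n) := by
    have := Int.even_mul_succ_self n
    convert this using 1; ring
  have he' : ((n:ℂ) + 1/2)^2 = (e:ℂ) + e + 1/4 := by
    have : ((n:ℂ)^2 + n) = (e:ℂ) + e := by exact_mod_cast congrArg (Int.cast : ℤ → ℂ) he
    linear_combination this
  rw [← Complex.exp_add]
  rw [show (Real.pi:ℂ) * I * (v + (m:ℂ)) * ((n:ℂ) + 1/2)^2
      = ((Real.pi:ℂ) * I * (m:ℂ)/4 + (Real.pi:ℂ) * I * v * ((n:ℂ) + 1/2)^2)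
        + ((m*e : ℤ):ℂ) * (2 * (Real.pi:ℂ) * I) from by
    push_cast
    linear_combination ((Real.pi:ℂ) * I * (m:ℂ)) * he']
  rw [Complex.exp_add, Complex.exp_int_mul_two_pi_mul_I, mul_one]

lemma theta3_add_even (v : ℂ) (m : ℤ) (hm : Even m) : θ₃ (v + (m : ℂ)) = θ₃ v := by
  obtain ⟨e, he⟩ := hm
  rw [θ₃, θ₃]
  refine tsum_congr fun n => ?_
  have he' : (m:ℂ) = (e:ℂ) + e := by exact_mod_cast congrArg (Int.cast : ℤ → ℂ) he
  rw [show (Real.pi:ℂ) * I * (v + (m:ℂ)) * (n:ℂ)^2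
      = (Real.pi:ℂ) * I * v * (n:ℂ)^2 + ((e*n^2 : ℤ):ℂ) * (2 * (Real.pi:ℂ) * I) from by
    push_cast
    linear_combination ((Real.pi:ℂ) * I * (n:ℂ)^2) * he']
  rw [Complex.exp_add, Complex.exp_int_mul_two_pi_mul_I, mul_one]

lemma theta3_S {τ : ℂ} (hτ : 0 < τ.im) :
    θ₃ (-(1/τ)) = (-I * τ)^(1/2 : ℂ) * jacobiTheta₂ 0 τ := by
  have h0 : τ ≠ 0 := fun h => by simp [h] at hτ
  have h1 : (-I * τ)^(1/2 : ℂ) ≠ 0 := by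
    rw [Ne, cpow_eq_zero_iff, not_and_or]
    exact Or.inl (mul_ne_zero (neg_ne_zero.mpr I_ne_zero) h0)
  rw [theta3_eq, jacobiTheta₂_functional_equation 0 τ, zero_div,
    show -(Real.pi:ℂ) * I * (0:ℂ)^2 / τ = 0 from by ring, Complex.exp_zero, mul_one,
    ← mul_assoc, mul_one_div, div_self h1, one_mul, show (-1/τ:ℂ) = -(1/τ) from by ring]

lemma theta2_S {τ : ℂ} (hτ : 0 < τ.im) :
    θ₂ (-(1/τ)) = (-I * τ)^(1/2 : ℂ) * jacobiTheta₂ (1/2) τ := by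
  have h0 : τ ≠ 0 := fun h => by simp [h] at hτ
  have h1 : (-I * τ)^(1/2 : ℂ) ≠ 0 := by
    rw [Ne, cpow_eq_zero_iff, not_and_or]
    exact Or.inl (mul_ne_zero (neg_ne_zero.mpr I_ne_zero) h0)
  rw [theta2_eq, show ((-(1/τ))/2 : ℂ) = -(1/(2*τ)) from by ring, jacobiTheta₂_neg_left,
    jacobiTheta₂_functional_equation (1/2) τ,
    show ((1:ℂ)/2/τ) = 1/(2*τ) from by ring, show (-1/τ : ℂ) = -(1/τ) from by ring,
    show Complex.exp (Real.pi * I * (-(1/τ)) / 4)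
      = Complex.exp (-(Real.pi:ℂ) * I * (1/2:ℂ)^2 / τ) from by
        congr 1
        ring,
    ← mul_assoc, ← mul_assoc, mul_one_div, div_self h1, one_mul]

lemma cpow_half_real_mul {r : ℝ} (hr : 0 < r) {w : ℂ} (hw : w ≠ 0) :
    ((r:ℂ) * w)^(1/2 : ℂ) = (r:ℂ)^(1/2 : ℂ) * w^(1/2 : ℂ) := by
  have hr0 : (r:ℂ) ≠ 0 := ofReal_ne_zero.mpr hr.ne'
  rw [cpow_def_of_ne_zero (mul_ne_zero hr0 hw), cpow_def_of_ne_zero hr0,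
    cpow_def_of_ne_zero hw, ← Complex.exp_add, Complex.log_ofReal_mul hr hw]
  rw [Complex.ofReal_log hr.le]
  ring

/-- jacobiTheta₂ with real `z` tends to 1 as im τ → ∞. -/
lemma tendsto_jacobiTheta₂_one {z : ℂ} (hz : z.im = 0) :
    Tendsto (fun τ : ℂ => jacobiTheta₂ z τ) (comap Complex.im atTop) (𝓝 1) := by
  have key : ∀ τ : ℂ, 0 < τ.im →
      ‖jacobiTheta₂ z τ - 1‖ ≤ 2 * Real.exp (-Real.pi * τ.im) / (1 - Real.exp (-Real.pi * τ.im)) := by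
    intro τ hτ
    set r : ℝ := Real.exp (-Real.pi * τ.im) with hrdef
    have hr0 : 0 < r := Real.exp_pos _
    have hr1 : r < 1 := Real.exp_lt_one_iff.mpr
      (mul_neg_of_neg_of_pos (neg_lt_zero.mpr Real.pi_pos) hτ)
    have hsum := hasSum_jacobiTheta₂_term z hτ
    have h00 : jacobiTheta₂_term 0 z τ = 1 := by
      simp [jacobiTheta₂_term]
    have hupd : HasSum (Function.update (fun n => jacobiTheta₂_term n z τ) 0 0)
        (jacobiTheta₂ z τ - 1) := by
      have := hsum.update 0 0
      rw [h00] at this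
      convert this using 1
      rfl
      ring
    set B : ℤ → ℝ := fun nn => if nn = 0 then 0 else r ^ nn.natAbs with hB
    have hBle : ∀ nn : ℤ,
        ‖Function.update (fun n => jacobiTheta₂_term n z τ) 0 0 nn‖ ≤ B nn := by
      intro nn
      rcases eq_or_ne nn 0 with h | h
      · subst h
        rw [Function.update_self]
        simp [hB]
      · rw [Function.update_of_ne h, hB]
        simp only [h, if_false]
        rw [norm_jacobiTheta₂_term, hz]
        simp only [mul_zero, sub_zero]
        rw [show r ^ nn.natAbs = Real.exp ((nn.natAbs : ℝ) * (-Real.pi * τ.im)) from by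
          rw [Real.exp_nat_mul]]
        rw [Real.exp_le_exp]
        have h1 : (1:ℝ) ≤ (nn.natAbs : ℝ) := by
          exact_mod_cast Nat.one_le_iff_ne_zero.mpr (Int.natAbs_ne_zero.mpr h)
        have h2 : ((nn:ℝ))^2 = ((nn.natAbs : ℝ))^2 := by
          rw [Nat.cast_natAbs, Int.cast_abs]; exact (_root_.sq_abs ((nn:ℝ))).symm
        rw [h2]
        have h3 : (nn.natAbs:ℝ) ≤ (nn.natAbs:ℝ)^2 := by nlinarith
        nlinarith [mul_le_mul_of_nonneg_left h3 (mul_pos Real.pi_pos hτ).le]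
    have hfB : HasSum (fun n : ℕ => if n = 0 then (0:ℝ) else r ^ n) ((1-r)⁻¹ - 1) := by
      have hg : HasSum (fun n : ℕ => r ^ n) (1-r)⁻¹ :=
        hasSum_geometric_of_lt_one hr0.le hr1
      have h := hg.update 0 0
      rw [pow_zero] at h
      have heq : (fun n : ℕ => if n = 0 then (0:ℝ) else r ^ n)
          = Function.update (fun n : ℕ => r ^ n) 0 0 := by
        funext n
        rw [Function.update_apply]
      rw [heq, show (1-r)⁻¹ - 1 = 0 - 1 + (1-r)⁻¹ from by ring]
      exact h
    have hgB : HasSum (fun n : ℕ => r ^ (n+1)) (r * (1-r)⁻¹) := by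
      have hg : HasSum (fun n : ℕ => r ^ n) (1-r)⁻¹ :=
        hasSum_geometric_of_lt_one hr0.le hr1
      have := hg.mul_left r
      convert this using 1
      rfl
      funext n
      rw [pow_succ']
    have hBsum : HasSum B (((1-r)⁻¹ - 1) + r * (1-r)⁻¹) := by
      have := hfB.int_rec hgB
      convert this using 1
      funext nn
      cases nn with
      | ofNat m =>
          show (if (Int.ofNat m) = 0 then (0:ℝ) else r ^ (Int.ofNat m).natAbs)
            = (if m = 0 then (0:ℝ) else r ^ m)
          simp [Int.ofNat_eq_zero]
      | negSucc m =>
          show (if (Int.negSucc m) = 0 then (0:ℝ) else r ^ (Int.negSucc m).natAbs)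
            = r ^ (m + 1)
          rw [if_neg (Int.negSucc_ne_zero m), Int.natAbs_negSucc]
    have hsummable : Summable (fun nn : ℤ =>
        ‖Function.update (fun n => jacobiTheta₂_term n z τ) 0 0 nn‖) :=
      Summable.of_nonneg_of_le (fun _ => norm_nonneg _) hBle hBsum.summable
    calc ‖jacobiTheta₂ z τ - 1‖ = ‖∑' nn : ℤ, Function.update (fun n => jacobiTheta₂_term n z τ) 0 0 nn‖ := by
          rw [hupd.tsum_eq]
      _ ≤ ∑' nn : ℤ, ‖Function.update (fun n => jacobiTheta₂_term n z τ) 0 0 nn‖ :=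
          norm_tsum_le_tsum_norm hsummable
      _ ≤ ∑' nn : ℤ, B nn := Summable.tsum_mono hsummable hBsum.summable hBle
      _ = ((1-r)⁻¹ - 1) + r * (1-r)⁻¹ := hBsum.tsum_eq
      _ = 2 * r / (1 - r) := by
          have hr2 : 1 - r ≠ 0 := by linarith
          field_simp
          ring
  have hg0 : Tendsto (fun τ : ℂ => 2 * Real.exp (-Real.pi * τ.im) / (1 - Real.exp (-Real.pi * τ.im)))
      (comap Complex.im atTop) (𝓝 0) := by
    have him : Tendsto Complex.im (comap Complex.im atTop) atTop := tendsto_comap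
    have hexp : Tendsto (fun τ : ℂ => Real.exp (-Real.pi * τ.im)) (comap Complex.im atTop) (𝓝 0) := by
      have h1 : Tendsto (fun τ : ℂ => -(Real.pi * τ.im)) (comap Complex.im atTop) atBot :=
        tendsto_neg_atTop_atBot.comp (him.const_mul_atTop Real.pi_pos)
      exact (Real.tendsto_exp_atBot.comp h1).congr (fun τ => by rw [Function.comp_apply, neg_mul])
    have hden : Tendsto (fun τ : ℂ => 1 - Real.exp (-Real.pi * τ.im))
        (comap Complex.im atTop) (𝓝 (1 - 0)) := tendsto_const_nhds.sub hexp
    have := (hexp.const_mul 2).div hden (by norm_num)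
    simp only [mul_zero, sub_zero, zero_div] at this; exact this
  have hev : ∀ᶠ τ : ℂ in comap Complex.im atTop, 0 < τ.im :=
    tendsto_comap.eventually (eventually_gt_atTop 0)
  have : Tendsto (fun τ : ℂ => jacobiTheta₂ z τ - 1) (comap Complex.im atTop) (𝓝 0) := by
    apply squeeze_zero_norm' (hev.mono fun τ hτ => key τ hτ) hg0
  have := this.add_const 1
  simpa using this

theorem behavior_at_low_cusps (n : ℕ) (hn : 6 ≤ n) (hn2 : Even n)
    (k : ℕ) (hk : k ≤ 3)
    (a b d : ℤ) (hdet : a * d - 2 ^ k * b = 1) :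
    ∃ ε₁ ε₂ : ℂ, ε₁ ≠ 0 ∧ ε₂ ≠ 0 ∧
      Tendsto (fun τ : ℂ =>
          xfun n (((a : ℂ) * τ + b) / ((2 ^ k : ℂ) * τ + d)))
        (comap Complex.im atTop) (𝓝 ε₁) ∧
      Tendsto (fun τ : ℂ =>
          yfun n (((a : ℂ) * τ + b) / ((2 ^ k : ℂ) * τ + d)))
        (comap Complex.im atTop) (𝓝 ε₂) := by
  obtain ⟨K, hK3⟩ : ∃ K, k + K = 3 := ⟨3 - k, by omega⟩
  obtain ⟨M, hM⟩ : ∃ M, n - 1 = k + (M + 2) := ⟨n - k - 3, by omega⟩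
  obtain ⟨P, hP⟩ : ∃ P, M + 2 = K + P := ⟨M + 2 - K, by omega⟩
  set ζ : ℂ := Complex.exp (Real.pi * I * ((2^(M+2)*a : ℤ) : ℂ) / 4) with hζ
  set ζ' : ℂ := Complex.exp (Real.pi * I * ((2^K*a : ℤ) : ℂ) / 4) with hζ'
  set ρ : ℂ := ((2:ℂ)^P)^(1/2 : ℂ) with hρ
  have hζ0 : ζ ≠ 0 := Complex.exp_ne_zero _
  have hζ'0 : ζ' ≠ 0 := Complex.exp_ne_zero _
  have hρ0 : ρ ≠ 0 := by
    rw [hρ, Ne, cpow_eq_zero_iff, not_and_or]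
    exact Or.inl (pow_ne_zero _ two_ne_zero)
  set U : ℂ → ℂ := fun τ => ((2:ℂ)^k * τ + d) / (2:ℂ)^(M+2) with hU
  have hUim : ∀ τ : ℂ, (U τ).im = ((2:ℝ)^k / (2:ℝ)^(M+2)) * τ.im := by
    intro τ
    rw [hU]
    simp only
    rw [show (2:ℂ)^(M+2) = (((2:ℝ)^(M+2) : ℝ) : ℂ) from by push_cast; ring,
      show (2:ℂ)^k = (((2:ℝ)^k : ℝ) : ℂ) from by push_cast; ring]
    simp only [Complex.div_ofReal_im, Complex.add_im, Complex.mul_im, Complex.ofReal_re,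
      Complex.ofReal_im, Complex.intCast_im, zero_mul, mul_zero, add_zero, zero_add]
    ring
  have hUtend : Tendsto U (comap Complex.im atTop) (comap Complex.im atTop) := by
    rw [tendsto_comap_iff]
    have h1 : Tendsto (fun τ : ℂ => ((2:ℝ)^k / (2:ℝ)^(M+2)) * τ.im)
        (comap Complex.im atTop) atTop := tendsto_comap.const_mul_atTop (by positivity)
    exact h1.congr fun τ => (hUim τ).symm
  have hPim : ∀ τ : ℂ, ((2:ℂ)^P * U τ).im = (2:ℝ)^P * (U τ).im := by
    intro τ
    rw [show (2:ℂ)^P = (((2:ℝ)^P : ℝ) : ℂ) from by push_cast; ring]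
    simp only [Complex.mul_im, Complex.ofReal_re, Complex.ofReal_im, zero_mul, mul_zero,
      add_zero, zero_add]
  have hmul : Tendsto (fun τ : ℂ => (2:ℂ)^P * U τ)
      (comap Complex.im atTop) (comap Complex.im atTop) := by
    rw [tendsto_comap_iff]
    have h1 : Tendsto (fun τ : ℂ => ((2:ℝ)^P * ((2:ℝ)^k / (2:ℝ)^(M+2))) * τ.im)
        (comap Complex.im atTop) atTop := tendsto_comap.const_mul_atTop (by positivity)
    refine h1.congr fun τ => ?_
    show _ = ((2:ℂ)^P * U τ).im
    rw [hPim τ, hUim τ]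
    ring
  have h12 : ((1/2 : ℂ)).im = 0 := by
    rw [show (1/2:ℂ) = ((1/2:ℝ):ℂ) from by norm_num]
    exact Complex.ofReal_im _
  have hJ0U : Tendsto (fun τ : ℂ => jacobiTheta₂ 0 (U τ)) (comap Complex.im atTop) (𝓝 1) :=
    (tendsto_jacobiTheta₂_one (z := 0) rfl).comp hUtend
  have hJ4U : Tendsto (fun τ : ℂ => jacobiTheta₂ (1/2) (U τ)) (comap Complex.im atTop) (𝓝 1) :=
    (tendsto_jacobiTheta₂_one h12).comp hUtend
  have hJ4P : Tendsto (fun τ : ℂ => jacobiTheta₂ (1/2) ((2:ℂ)^P * U τ))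
      (comap Complex.im atTop) (𝓝 1) :=
    (tendsto_jacobiTheta₂_one h12).comp hmul
  have hev : ∀ᶠ τ : ℂ in comap Complex.im atTop, 0 < τ.im :=
    tendsto_comap.eventually (eventually_gt_atTop 0)
  have keypt : ∀ τ : ℂ, 0 < τ.im →
      xfun n (((a:ℂ)*τ+b)/((2:ℂ)^k*τ+d))
        = 2 * jacobiTheta₂ 0 (U τ) / (ζ * jacobiTheta₂ (1/2) (U τ))
      ∧ yfun n (((a:ℂ)*τ+b)/((2:ℂ)^k*τ+d))
        = ζ' * ρ * jacobiTheta₂ (1/2) ((2:ℂ)^P * U τ) / (ζ * jacobiTheta₂ (1/2) (U τ)) := by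
    intro τ hτ
    have hcdim : ((2:ℂ)^k * τ + (d:ℂ)).im = (2:ℝ)^k * τ.im := by
      rw [show (2:ℂ)^k = (((2:ℝ)^k : ℝ):ℂ) from by push_cast; ring]
      simp only [Complex.add_im, Complex.mul_im, Complex.ofReal_re, Complex.ofReal_im,
        Complex.intCast_im, zero_mul, mul_zero, add_zero, zero_add]
    have hcd : (2:ℂ)^k * τ + (d:ℂ) ≠ 0 := by
      intro h
      have hpos : (0:ℝ) < (2:ℝ)^k * τ.im := mul_pos (by positivity) hτ
      rw [← hcdim, h] at hpos
      simp at hpos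
    have hu_im : 0 < (U τ).im := by
      rw [hUim]
      exact mul_pos (by positivity) hτ
    have hv_im : 0 < ((2:ℂ)^P * U τ).im := by
      rw [hPim]
      exact mul_pos (by positivity) hu_im
    have hu0 : U τ ≠ 0 := by
      intro h
      rw [h] at hu_im
      simp at hu_im
    have hIu : (-I * U τ) ^ (1/2 : ℂ) ≠ 0 := by
      rw [Ne, cpow_eq_zero_iff, not_and_or]
      exact Or.inl (mul_ne_zero (neg_ne_zero.mpr I_ne_zero) hu0)
    have hdetC : (a:ℂ)*d - (2:ℂ)^k*b = 1 := by exact_mod_cast hdet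
    have hpow2 : ((2:ℂ)^(M+2) : ℂ) ≠ 0 := pow_ne_zero _ two_ne_zero
    have hpowK : ((2:ℂ)^K : ℂ) ≠ 0 := pow_ne_zero _ two_ne_zero
    have hX1 : (2:ℂ)^(n-1) * (((a:ℂ)*τ+b)/((2:ℂ)^k*τ+d))
        = -(1/(U τ)) + ((2^(M+2)*a : ℤ):ℂ) := by
      rw [show (2:ℂ)^(n-1) = (2:ℂ)^k * (2:ℂ)^(M+2) from by rw [← pow_add, hM], hU]
      simp only
      push_cast
      field_simp
      linear_combination (-1:ℂ) * hdetC
    have hX2 : (8:ℂ) * (((a:ℂ)*τ+b)/((2:ℂ)^k*τ+d))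
        = -(1/((2:ℂ)^P * U τ)) + ((2^K*a : ℤ):ℂ) := by
      have hpowP : ((2:ℂ)^P : ℂ) ≠ 0 := pow_ne_zero _ two_ne_zero
      have hvU : (2:ℂ)^P * U τ = ((2:ℂ)^k * τ + d) / (2:ℂ)^K := by
        rw [hU]
        simp only
        rw [show (2:ℂ)^(M+2) = (2:ℂ)^K * (2:ℂ)^P from by rw [← pow_add, hP]]
        field_simp
      rw [hvU, show (8:ℂ) = (2:ℂ)^k * (2:ℂ)^K from by rw [← pow_add, hK3]; norm_num]
      push_cast
      field_simp
      linear_combination (-1:ℂ) * hdetC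
    constructor
    · simp only [xfun]
      rw [hX1, theta3_add_even (-(1/(U τ))) (2^(M+2)*a) ⟨2^(M+1)*a, by ring⟩,
        theta3_S hu_im, theta2_add_int, theta2_S hu_im, ← hζ]
      rw [show 2 * ((-I*U τ)^(1/2:ℂ) * jacobiTheta₂ 0 (U τ))
          = (-I*U τ)^(1/2:ℂ) * (2 * jacobiTheta₂ 0 (U τ)) from by ring,
        show ζ * ((-I*U τ)^(1/2:ℂ) * jacobiTheta₂ (1/2) (U τ))
          = (-I*U τ)^(1/2:ℂ) * (ζ * jacobiTheta₂ (1/2) (U τ)) from by ring,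
        mul_div_mul_left _ _ hIu]
    · simp only [yfun]
      rw [hX1, hX2, theta2_add_int, theta2_add_int, theta2_S hu_im, theta2_S hv_im, ← hζ, ← hζ']
      rw [show -I * ((2:ℂ)^P * U τ) = (((2:ℝ)^P : ℝ):ℂ) * (-I * U τ) from by push_cast; ring,
        cpow_half_real_mul (by positivity) (mul_ne_zero (neg_ne_zero.mpr I_ne_zero) hu0),
        show ((((2:ℝ)^P : ℝ):ℂ))^(1/2:ℂ) = ρ from by rw [hρ]; norm_cast]
      rw [show ζ' * (ρ * (-I*U τ)^(1/2:ℂ) * jacobiTheta₂ (1/2) ((2:ℂ)^P * U τ))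
          = (-I*U τ)^(1/2:ℂ) * (ζ' * ρ * jacobiTheta₂ (1/2) ((2:ℂ)^P * U τ)) from by ring,
        show ζ * ((-I*U τ)^(1/2:ℂ) * jacobiTheta₂ (1/2) (U τ))
          = (-I*U τ)^(1/2:ℂ) * (ζ * jacobiTheta₂ (1/2) (U τ)) from by ring,
        mul_div_mul_left _ _ hIu]
  refine ⟨2/ζ, ζ'*ρ/ζ, div_ne_zero two_ne_zero hζ0,
    div_ne_zero (mul_ne_zero hζ'0 hρ0) hζ0, ?_, ?_⟩
  · have hlim : Tendsto (fun τ : ℂ => 2 * jacobiTheta₂ 0 (U τ) / (ζ * jacobiTheta₂ (1/2) (U τ)))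
        (comap Complex.im atTop) (𝓝 (2*1/(ζ*1))) :=
      (hJ0U.const_mul 2).div (hJ4U.const_mul ζ) (by simpa using hζ0)
    have := hlim.congr' (hev.mono fun τ hτ => ((keypt τ hτ).1).symm)
    simpa using this
  · have hlim : Tendsto (fun τ : ℂ =>
        ζ' * ρ * jacobiTheta₂ (1/2) ((2:ℂ)^P * U τ) / (ζ * jacobiTheta₂ (1/2) (U τ)))
        (comap Complex.im atTop) (𝓝 ((ζ'*ρ)*1/(ζ*1))) :=
      (hJ4P.const_mul (ζ'*ρ)).div (hJ4U.const_mul ζ) (by simpa using hζ0)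
    have := hlim.congr' (hev.mono fun τ hτ => ((keypt τ hτ).2).symm)
    simpa using this
end
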